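/- Let ε ∈ (0,1/4), q₀ := 3/(2ε) (so q₀ > 6), assume D := ‖ξ‖_{W^{3,2}(0,𝒯)} < ε₀, and let w ∈ X_{q₀}. Then there is a constant C > 0 such that ∫_0^t ‖T(t,s)P div(w⊗w)(s)‖_∞ ds ≤ C [w]_{q₀}² t^{−1/2} for all t > 0. -/

import Mathlib

/- Common setting: exterior domain in ℝ³, Lorentz norms, the non-autonomous Oseen
evolution operator, Helmholtz projection, the time-periodic Navier–Stokes solution,
and the various norms/spaces used in Galdi–Hishida,
"Attainability of Time-Periodic flow of a Viscous Liquid Past an Oscillating Body". -/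

open MeasureTheory Set Filter
open scoped ENNReal NNReal RealInnerProductSpace Topology

noncomputable section

abbrev Vec : Type := EuclideanSpace ℝ (Fin 3)
abbrev VF : Type := Vec → Vec
abbrev Mat3 : Type := EuclideanSpace ℝ (Fin 3 × Fin 3)
abbrev MF : Type := Vec → Mat3

def mk3 (f : Fin 3 → ℝ) : Vec := (WithLp.equiv 2 (Fin 3 → ℝ)).symm f
def mk9 (f : Fin 3 × Fin 3 → ℝ) : Mat3 := (WithLp.equiv 2 (Fin 3 × Fin 3 → ℝ)).symm f

/-- standard basis of ℝ³ -/
def e3 (i : Fin 3) : Vec := EuclideanSpace.single i 1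

/-- divergence of a vector field -/
def div3 (u : VF) (x : Vec) : ℝ := ∑ i, fderiv ℝ u x (e3 i) i

/-- Laplacian of a vector field -/
def lap3 (u : VF) (x : Vec) : Vec := ∑ i, iteratedFDeriv ℝ 2 u x (fun _ => e3 i)

/-- directional derivative `(a · ∇)u` -/
def dirD (a : Vec) (u : VF) (x : Vec) : Vec := fderiv ℝ u x a

/-- the gradient matrix `(∇u)_{ij} = ∂_j u_i` of a vector field -/
def gradVF (u : VF) (x : Vec) : Mat3 := mk9 fun ij => fderiv ℝ u x (e3 ij.2) ij.1

/-- row-wise divergence of a matrix field -/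
def divMat (F : MF) : VF := fun x => mk3 fun i => ∑ j, fderiv ℝ (fun y => F y (i, j)) x (e3 j)

/-- Lebesgue measure restricted to `Ω` -/
def μΩ (Ω : Set Vec) : Measure Vec := volume.restrict Ω

/-- the `L^p(Ω)` norm (`p = ∞` allowed) -/
def LpN {E : Type*} [NormedAddCommGroup E] (Ω : Set Vec) (p : ℝ≥0∞) (u : Vec → E) : ℝ≥0∞ :=
  eLpNorm u p (μΩ Ω)

/-- the weak Lorentz `L^{p,∞}(Ω)` quasinorm -/
def wLor {E : Type*} [NormedAddCommGroup E] (Ω : Set Vec) (p : ℝ) (u : Vec → E) : ℝ≥0∞ :=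
  ⨆ t : ℝ≥0, (t : ℝ≥0∞) * (μΩ Ω {x | (t : ℝ) < ‖u x‖}) ^ (1 / p)

/-- the Lorentz `L^{p,1}(Ω)` norm -/
def lor1 {E : Type*} [NormedAddCommGroup E] (Ω : Set Vec) (p : ℝ) (u : Vec → E) : ℝ≥0∞ :=
  ∫⁻ t in Ioi (0 : ℝ), (μΩ Ω {x | t < ‖u x‖}) ^ (1 / p)

/-- the `L^{r,∞}(Ω)` norm, with the convention that it is the `L^∞` norm for `r = ∞` -/
def lorN (Ω : Set Vec) (r : ℝ≥0∞) (u : VF) : ℝ≥0∞ :=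
  if r = ∞ then LpN Ω ∞ u else wLor Ω r.toReal u

/-- `Ω ⊆ ℝ³` is an exterior domain with smooth boundary -/
structure ExteriorDomain (Ω : Set Vec) : Prop where
  isOpen : IsOpen Ω
  compl_compact : IsCompact Ωᶜ
  nonempty : Ω.Nonempty
  connected : IsConnected Ω
  smooth_boundary : ∀ x ∈ frontier Ω, ∃ (U : Set Vec) (φ : Vec → ℝ),
    x ∈ U ∧ IsOpen U ∧ ContDiff ℝ (⊤ : ℕ∞) φ ∧ (∀ y ∈ U, (y ∈ Ω ↔ φ y < 0)) ∧
    ∀ y ∈ U ∩ frontier Ω, gradient φ y ≠ 0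

/-- weak form of `div u = 0` in `Ω` together with zero normal trace on `∂Ω`
(membership in the solenoidal space, apart from integrability) -/
def WeakDivFree (Ω : Set Vec) (u : VF) : Prop :=
  ∀ φ : Vec → ℝ, ContDiff ℝ (⊤ : ℕ∞) φ → HasCompactSupport φ →
    ∫ x in Ω, ⟪u x, gradient φ x⟫ = 0

/-- membership in `L^q_σ(Ω)` -/
def MemLqσ (Ω : Set Vec) (q : ℝ≥0∞) (u : VF) : Prop :=
  MemLp u q (μΩ Ω) ∧ WeakDivFree Ω u

/-- membership in `L^{q,∞}_σ(Ω)` -/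
def MemWeakLqσ (Ω : Set Vec) (q : ℝ) (u : VF) : Prop :=
  AEStronglyMeasurable u (μΩ Ω) ∧ wLor Ω q u < ∞ ∧ WeakDivFree Ω u

/-- membership in `L^{q,1}_σ(Ω)` -/
def MemLor1σ (Ω : Set Vec) (q : ℝ) (u : VF) : Prop :=
  AEStronglyMeasurable u (μΩ Ω) ∧ lor1 Ω q u < ∞ ∧ WeakDivFree Ω u

/-- the `W^{3,2}(0,𝒯)` norm of the oscillation profile `ξ` -/
def W32Norm (𝒯 : ℝ) (ξ : ℝ → Vec) : ℝ :=
  (∑ k ∈ Finset.range 4, ∫ t in Ioo 0 𝒯, ‖iteratedDeriv k ξ t‖ ^ 2) ^ ((1 : ℝ) / 2)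

/-- `ξ` is a `𝒯`-periodic, mean-zero profile of class `W^{3,2}(0,𝒯)` -/
structure PeriodicData (𝒯 : ℝ) (ξ : ℝ → Vec) : Prop where
  pos : 0 < 𝒯
  periodic : ∀ t, ξ (t + 𝒯) = ξ t
  mean_zero : ∫ t in Ioo 0 𝒯, ξ t = 0
  regular : ContDiff ℝ 2 ξ
  thirdDeriv : ∀ᵐ t, DifferentiableAt ℝ (iteratedDeriv 2 ξ) t
  sobolev : MemLp (iteratedDeriv 3 ξ) 2 (volume.restrict (Ioo 0 𝒯))

/-- the transition function `h`  -/
structure TransitionFn (h : ℝ → ℝ) : Prop where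
  c1 : ContDiff ℝ 1 h
  mem_Icc : ∀ t, h t ∈ Icc (0 : ℝ) 1
  before : ∀ t ≤ 0, h t = 0
  after : ∀ t ≥ 1, h t = 1

/-- `|h′|₀ = sup_{t ≥ 0} |h′(t)|` -/
def hp0 (h : ℝ → ℝ) : ℝ := ⨆ t : Ici (0 : ℝ), |deriv h t.1|

/-- `(v, p_v)` is a `𝒯`-periodic solution of the time-periodic Navier–Stokes problem
driven by the oscillation `ξ` -/
structure IsPeriodicSolution (Ω : Set Vec) (𝒯 : ℝ) (ξ : ℝ → Vec)
    (v : ℝ → VF) (pv : ℝ → Vec → ℝ) : Prop where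
  periodic_v : ∀ t, v (t + 𝒯) = v t
  periodic_p : ∀ t, pv (t + 𝒯) = pv t
  pde : ∀ t, ∀ x ∈ Ω,
    deriv (fun τ => v τ x) t + dirD (v t x) (v t) x
      = lap3 (v t) x + dirD (ξ t) (v t) x - gradient (pv t) x
  incompressible : ∀ t, ∀ x ∈ Ω, div3 (v t) x = 0
  bc : ∀ t, ∀ x ∈ frontier Ω, v t x = ξ t
  decay : ∀ t, Tendsto (v t) (cocompact Vec) (𝓝 0)

/-- iterated time derivative `∂_t^k` of a time-dependent field -/
def tD {E : Type*} [NormedAddCommGroup E] [NormedSpace ℝ E] (k : ℕ)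
    (v : ℝ → Vec → E) : ℝ → Vec → E :=
  (fun w => fun t x => deriv (fun τ => w τ x) t)^[k] v

/-- the `D^{m,2}(Ω)` seminorm -/
def Dm2 {E : Type*} [NormedAddCommGroup E] [NormedSpace ℝ E] (Ω : Set Vec) (m : ℕ)
    (u : Vec → E) : ℝ≥0∞ :=
  eLpNorm (fun x => iteratedFDeriv ℝ m u x) 2 (μΩ Ω)

/-- the `L²(0,𝒯; B)` norm built from a seminorm `g` of the spatial variable -/
def L2T (𝒯 : ℝ) (g : ℝ → ℝ≥0∞) : ℝ≥0∞ := (∫⁻ t in Ioo (0 : ℝ) 𝒯, g t ^ (2 : ℝ)) ^ ((1 : ℝ) / 2)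

/-- the `L^∞(0,𝒯; B)` norm built from a seminorm `g` of the spatial variable -/
def LinfT (𝒯 : ℝ) (g : ℝ → ℝ≥0∞) : ℝ≥0∞ := essSup g (volume.restrict (Ioo (0 : ℝ) 𝒯))

/-- membership of `v` in `W^{2,2}(D^{2,2}) ∩ W^{1,2}(D^{4,2}) ∩ W^{2,∞}(W^{1,2}) ∩ L^∞(D^{3,2})` -/
def VClass (Ω : Set Vec) (𝒯 : ℝ) (v : ℝ → VF) : Prop :=
  (∀ k ≤ 2, L2T 𝒯 (fun t => Dm2 Ω 2 (tD k v t)) < ∞) ∧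
  (∀ k ≤ 1, L2T 𝒯 (fun t => Dm2 Ω 4 (tD k v t)) < ∞) ∧
  (∀ k ≤ 2, LinfT 𝒯 (fun t => Dm2 Ω 0 (tD k v t) + Dm2 Ω 1 (tD k v t)) < ∞) ∧
  LinfT 𝒯 (fun t => Dm2 Ω 3 (v t)) < ∞

/-- membership of `p_v` in `L^∞(W^{1,2}) ∩ W^{1,2}(D^{3,2})` -/
def PClass (Ω : Set Vec) (𝒯 : ℝ) (p : ℝ → Vec → ℝ) : Prop :=
  LinfT 𝒯 (fun t => Dm2 Ω 0 (p t) + Dm2 Ω 1 (p t)) < ∞ ∧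
  ∀ k ≤ 1, L2T 𝒯 (fun t => Dm2 Ω 3 (tD k p t)) < ∞

/-- the evolution operator `T(t,s)` (and its adjoint) generated by the non-autonomous
Oseen operator `-P[Δ + η(t)·∇]` in `Ω`, with homogeneous Dirichlet boundary condition
(Hansel–Rhandi) -/
structure OseenEvolution (Ω : Set Vec) (η : ℝ → Vec) where
  T : ℝ → ℝ → VF → VF
  Tstar : ℝ → ℝ → VF → VF
  init : ∀ s f, T s s f = f
  linear : ∀ t s, IsLinearMap ℝ (T t s)
  comp : ∀ t r s, s ≤ r → r ≤ t → ∀ f, T t r (T r s f) = T t s f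
  pde : ∀ s ≥ 0, ∀ f : VF, WeakDivFree Ω f →
    ∃ p : ℝ → Vec → ℝ, ∀ t > s, ∀ x ∈ Ω,
      deriv (fun τ => T τ s f x) t
        = lap3 (T t s f) x + dirD (η t) (T t s f) x - gradient (p t) x
      ∧ div3 (T t s f) x = 0
  bc : ∀ s ≥ 0, ∀ f : VF, ∀ t > s, ∀ x ∈ frontier Ω, T t s f x = 0
  decay : ∀ s ≥ 0, ∀ f : VF, ∀ t > s, Tendsto (T t s f) (cocompact Vec) (𝓝 0)
  adjoint : ∀ s t f g, ∫ x in Ω, ⟪T t s f x, g x⟫ = ∫ x in Ω, ⟪f x, Tstar t s g x⟫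

/-- the Helmholtz projection `P` on `Ω` -/
structure Helmholtz (Ω : Set Vec) where
  P : VF → VF
  linear : IsLinearMap ℝ P
  idem : ∀ u, P (P u) = P u
  solenoidal : ∀ u : VF, ContDiff ℝ (⊤ : ℕ∞) u → WeakDivFree Ω (P u)
  grad_part : ∀ u : VF, ContDiff ℝ (⊤ : ℕ∞) u →
    ∃ p : Vec → ℝ, ∀ x ∈ Ω, u x - P u x = gradient p x

/-- `E` is the bounded extension of the composite operator `T(t,s)P div` acting on
(Lorentz-)Lebesgue spaces of matrix fields -/
structure ExtensionOf (Ω : Set Vec) (η : ℝ → Vec) (O : OseenEvolution Ω η)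
    (H : Helmholtz Ω) (E : ℝ → ℝ → MF → VF) : Prop where
  agrees : ∀ t s (F : MF), ContDiff ℝ (⊤ : ℕ∞) F → HasCompactSupport F → tsupport F ⊆ Ω →
    E t s F = O.T t s (H.P (divMat F))
  linear : ∀ t s, IsLinearMap ℝ (E t s)
  bound : ∀ q r : ℝ, 3 / 2 < q → q < r → ∃ C > 0, ∀ s t : ℝ, 0 ≤ s → s < t → ∀ F : MF,
    AEStronglyMeasurable F (μΩ Ω) →
    LpN Ω (ENNReal.ofReal r) (E t s F)
      ≤ ENNReal.ofReal C * ENNReal.ofReal ((t - s) ^ (-((3 / q - 3 / r) / 2) - 1 / 2))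
        * wLor Ω q F
  bound_top : ∀ q : ℝ, 3 / 2 < q → ∃ C > 0, ∀ s t : ℝ, 0 ≤ s → s < t → ∀ F : MF,
    AEStronglyMeasurable F (μΩ Ω) →
    LpN Ω ∞ (E t s F)
      ≤ ENNReal.ofReal C * ENNReal.ofReal ((t - s) ^ (-(3 / (2 * q)) - 1 / 2)) * wLor Ω q F

/-- the forcing term `f = -h′ v + (h - h²)(v - ξ)·∇v` -/
def fForce (h : ℝ → ℝ) (ξ : ℝ → Vec) (v : ℝ → VF) : ℝ → VF := fun t x =>
  -(deriv h t) • v t x + (h t - h t ^ 2) • dirD (v t x - ξ t) (v t) x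

/-- tensor product `u ⊗ w` of two vector fields -/
def tensF (u w : VF) : MF := fun x => mk9 fun ij => u x ij.1 * w x ij.2

/-- the nonlinearity `F(w) = w ⊗ w + h (w ⊗ v + v ⊗ w)` -/
def Fnl (h : ℝ → ℝ) (v w : ℝ → VF) : ℝ → MF := fun s =>
  tensF (w s) (w s) + h s • (tensF (w s) (v s) + tensF (v s) (w s))

/-- `w₀(t) = ∫_0^t T(t,s) P f(s) ds` -/
def w0fn {Ω : Set Vec} {η : ℝ → Vec} (O : OseenEvolution Ω η) (H : Helmholtz Ω)
    (h : ℝ → ℝ) (ξ : ℝ → Vec) (v : ℝ → VF) : ℝ → VF := fun t x =>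
  ∫ s in Ioo (0 : ℝ) t, O.T t s (H.P (fForce h ξ v s)) x

/-- the weighted norm `[w]_q = sup_{t>0} t^{1/2 - 3/(2q)} ‖w(t)‖_{q,∞}` -/
def brk (Ω : Set Vec) (q : ℝ) (w : ℝ → VF) : ℝ≥0∞ :=
  ⨆ t : Ioi (0 : ℝ), ENNReal.ofReal ((t : ℝ) ^ ((1 : ℝ) / 2 - 3 / (2 * q))) * wLor Ω q (w t)

/-- `[v]₃ = sup_{t>0} ‖v(t)‖_{3,∞}` -/
def vsup3 (Ω : Set Vec) (v : ℝ → VF) : ℝ≥0∞ := ⨆ t : Ioi (0 : ℝ), wLor Ω 3 (v t)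

/-- weak-* continuity on `(0,∞)` with values in Lorentz spaces, tested against
smooth compactly supported fields -/
def WeakStarCont (Ω : Set Vec) (w : ℝ → VF) : Prop :=
  ∀ φ : VF, ContDiff ℝ (⊤ : ℕ∞) φ → HasCompactSupport φ →
    ContinuousOn (fun t => ∫ x in Ω, ⟪w t x, φ x⟫) (Ioi 0)

/-- membership in the space `X_q` -/
structure MemX (Ω : Set Vec) (q : ℝ) (w : ℝ → VF) : Prop where
  meas : ∀ t, 0 < t → AEStronglyMeasurable (w t) (μΩ Ω)
  solenoidal : ∀ t, 0 < t → WeakDivFree Ω (w t)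
  fin3 : brk Ω 3 w < ∞
  finq : brk Ω q w < ∞
  wstar : WeakStarCont Ω w
  zero : Tendsto (fun t => wLor Ω 3 (w t)) (𝓝[>] 0) (𝓝 0)

/-- `Ψw` is determined by `⟨(Ψw)(t), φ⟩ = ∫_0^t ⟨F(w)(s), ∇T(t,s)*φ⟩ ds` -/
def PsiProp {Ω : Set Vec} {η : ℝ → Vec} (O : OseenEvolution Ω η) (h : ℝ → ℝ)
    (v w Ψw : ℝ → VF) : Prop :=
  ∀ t, 0 < t → ∀ φ : VF, ContDiff ℝ (⊤ : ℕ∞) φ → HasCompactSupport φ →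
    (∀ x ∈ Ω, div3 φ x = 0) →
    ∫ x in Ω, ⟪Ψw t x, φ x⟫
      = ∫ s in Ioo (0 : ℝ) t, ∫ x in Ω, ⟪Fnl h v w s x, gradVF (O.Tstar t s φ) x⟫

/-- the weak form (4.1) of the integral equation -/
def WeakIntEq {Ω : Set Vec} {η : ℝ → Vec} (O : OseenEvolution Ω η) (H : Helmholtz Ω)
    (h : ℝ → ℝ) (ξ : ℝ → Vec) (v w : ℝ → VF) : Prop :=
  ∀ t, 0 < t → ∀ φ : VF, ContDiff ℝ (⊤ : ℕ∞) φ → HasCompactSupport φ →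
    (∀ x ∈ Ω, div3 φ x = 0) →
    ∫ x in Ω, ⟪w t x, φ x⟫
      = (∫ x in Ω, ⟪w0fn O H h ξ v t x, φ x⟫)
        + ∫ s in Ioo (0 : ℝ) t, ∫ x in Ω, ⟪Fnl h v w s x, gradVF (O.Tstar t s φ) x⟫

/-- the integral equation `w(t) = w₀(t) - ∫_0^t T(t,s)P div (Fw)(s) ds`,
satisfied in `L^{3,∞}_σ(Ω)` (i.e. a.e. in `Ω`) for every `t > 0` -/
def IntEq {Ω : Set Vec} {η : ℝ → Vec} (O : OseenEvolution Ω η) (H : Helmholtz Ω)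
    (E : ℝ → ℝ → MF → VF) (h : ℝ → ℝ) (ξ : ℝ → Vec) (v w : ℝ → VF) : Prop :=
  ∀ t, 0 < t → ∀ᵐ x ∂(μΩ Ω),
    w t x = w0fn O H h ξ v t x - ∫ s in Ioo (0 : ℝ) t, E t s (Fnl h v w s) x

/-- the properties of the solution constructed in the main theorem:
membership in `C_{w*}((0,∞); L^{3,∞}_σ)`, the integral equation in `L^{3,∞}_σ`,
the initial condition, and the uniform bound by `C‖ξ‖_{W^{3,2}}` -/
def MainProps (Ω : Set Vec) (𝒯 : ℝ) (ξ : ℝ → Vec) (h : ℝ → ℝ) (v : ℝ → VF)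
    {η : ℝ → Vec} (O : OseenEvolution Ω η) (H : Helmholtz Ω) (E : ℝ → ℝ → MF → VF)
    (w : ℝ → VF) : Prop :=
  (∀ t, 0 < t → AEStronglyMeasurable (w t) (μΩ Ω) ∧ wLor Ω 3 (w t) < ∞ ∧
      WeakDivFree Ω (w t)) ∧
  WeakStarCont Ω w ∧
  IntEq O H E h ξ v w ∧
  Tendsto (fun t => wLor Ω 3 (w t)) (𝓝[>] 0) (𝓝 0) ∧
  ∃ C > 0, ∀ t ≥ 0, wLor Ω 3 (w t) ≤ ENNReal.ofReal (C * W32Norm 𝒯 ξ)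

end

open MeasureTheory Set Filter
open scoped ENNReal NNReal RealInnerProductSpace Topology

private lemma norm_tensF (u : VF) (x : Vec) : ‖tensF u u x‖ = ‖u x‖ ^ 2 := by
  have hS : (0:ℝ) ≤ ∑ i, u x i ^ 2 := Finset.sum_nonneg fun i _ => sq_nonneg _
  have h1 : ‖tensF u u x‖ = Real.sqrt (∑ ij : Fin 3 × Fin 3, (u x ij.1 * u x ij.2) ^ 2) := by
    rw [EuclideanSpace.norm_eq]
    congr 1
    refine Finset.sum_congr rfl fun ij _ => ?_
    rw [Real.norm_eq_abs, sq_abs]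
    rfl
  have h2 : (∑ ij : Fin 3 × Fin 3, (u x ij.1 * u x ij.2) ^ 2) = (∑ i, u x i ^ 2) ^ 2 := by
    rw [Fintype.sum_prod_type]
    simp_rw [mul_pow, ← Finset.mul_sum, ← Finset.sum_mul]
    ring
  have h3 : ‖u x‖ ^ 2 = ∑ i, u x i ^ 2 := by
    rw [EuclideanSpace.norm_eq, Real.sq_sqrt]
    · refine Finset.sum_congr rfl fun i _ => by rw [Real.norm_eq_abs, sq_abs]
    · exact Finset.sum_nonneg fun i _ => sq_nonneg _
  rw [h1, h2, Real.sqrt_sq hS, h3]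


lemma lint_rpow {r : ℝ} (hr : -1 < r) {c : ℝ} (hc : 0 < c) :
    ∫⁻ s in Ioc (0:ℝ) c, ENNReal.ofReal (s ^ r) = ENNReal.ofReal (c ^ (r+1) / (r+1)) := by
  have hint : IntervalIntegrable (fun s : ℝ => s ^ r) volume 0 c :=
    intervalIntegral.intervalIntegrable_rpow' hr
  have hion : IntegrableOn (fun s : ℝ => s ^ r) (Ioc (0:ℝ) c) volume := by
    simpa [intervalIntegrable_iff, uIoc_of_le hc.le] using hint
  have hnn : 0 ≤ᵐ[volume.restrict (Ioc (0:ℝ) c)] fun s : ℝ => s ^ r := by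
    refine (ae_restrict_iff' measurableSet_Ioc).2 (ae_of_all _ fun s hs => ?_)
    exact Real.rpow_nonneg hs.1.le r
  rw [← ofReal_integral_eq_lintegral_ofReal hion hnn]
  congr 1
  rw [← intervalIntegral.integral_of_le hc.le, integral_rpow (Or.inl hr)]
  rw [Real.zero_rpow (by linarith : r + 1 ≠ 0)]
  ring

lemma key_beta {a b : ℝ} (ha0 : 0 < a) (ha1 : a < 1) (hb0 : 0 < b) (hb1 : b < 1) :
    ∃ K > 0, ∀ t : ℝ, 0 < t →
      (∫⁻ s in Ioo (0:ℝ) t, ENNReal.ofReal ((t - s) ^ (-a) * s ^ (-b)))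
        ≤ ENNReal.ofReal K * ENNReal.ofReal (t ^ (1 - a - b)) := by
  have h1a : (0:ℝ) < 1 - a := by linarith
  have h1b : (0:ℝ) < 1 - b := by linarith
  refine ⟨(2:ℝ) ^ (a + b - 1) * (1/(1-b) + 1/(1-a)),
    mul_pos (Real.rpow_pos_of_pos two_pos _)
      (add_pos (one_div_pos.2 h1b) (one_div_pos.2 h1a)), fun t ht => ?_⟩
  set m : ℝ := t / 2 with hm
  have hm0 : 0 < m := by positivity
  have hmt : m < t := by rw [hm]; linarith
  have hsplit : Ioo (0:ℝ) t = Ioc 0 m ∪ Ioo m t := by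
    ext s
    simp only [mem_Ioo, mem_union, mem_Ioc]
    constructor
    · rintro ⟨h1, h2⟩
      rcases le_or_gt s m with h | h
      · exact Or.inl ⟨h1, h⟩
      · exact Or.inr ⟨h, h2⟩
    · rintro (⟨h1, h2⟩ | ⟨h1, h2⟩)
      · exact ⟨h1, lt_of_le_of_lt h2 hmt⟩
      · exact ⟨lt_trans hm0 h1, h2⟩
  rw [hsplit, lintegral_union measurableSet_Ioo (by
    exact Set.disjoint_left.2 fun s hs hs' => absurd hs'.1 (not_lt.2 hs.2))]
  have piece1 : (∫⁻ s in Ioc (0:ℝ) m, ENNReal.ofReal ((t - s) ^ (-a) * s ^ (-b)))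
      ≤ ENNReal.ofReal (m ^ (-a) * (m ^ (1-b) / (1-b))) := by
    have hmono : ∀ s ∈ Ioc (0:ℝ) m,
        ENNReal.ofReal ((t - s) ^ (-a) * s ^ (-b))
          ≤ ENNReal.ofReal (m ^ (-a)) * ENNReal.ofReal (s ^ (-b)) := by
      intro s hs
      rw [← ENNReal.ofReal_mul (Real.rpow_nonneg hm0.le _)]
      apply ENNReal.ofReal_le_ofReal
      apply mul_le_mul_of_nonneg_right _ (Real.rpow_nonneg hs.1.le _)
      exact Real.rpow_le_rpow_of_nonpos hm0 (by linarith [hs.2]) (by linarith)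
    calc (∫⁻ s in Ioc (0:ℝ) m, ENNReal.ofReal ((t - s) ^ (-a) * s ^ (-b)))
        ≤ ∫⁻ s in Ioc (0:ℝ) m, ENNReal.ofReal (m ^ (-a)) * ENNReal.ofReal (s ^ (-b)) :=
          lintegral_mono_ae ((ae_restrict_iff' measurableSet_Ioc).2 (ae_of_all _ hmono))
      _ = ENNReal.ofReal (m ^ (-a)) * ∫⁻ s in Ioc (0:ℝ) m, ENNReal.ofReal (s ^ (-b)) :=
          lintegral_const_mul' _ _ ENNReal.ofReal_ne_top
      _ = ENNReal.ofReal (m ^ (-a)) * ENNReal.ofReal (m ^ (-b+1) / (-b+1)) := by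
          rw [lint_rpow (by linarith) hm0]
      _ = ENNReal.ofReal (m ^ (-a) * (m ^ (1-b) / (1-b))) := by
          rw [← ENNReal.ofReal_mul (Real.rpow_nonneg hm0.le _)]
          ring_nf
  have hrefl : (∫⁻ s in Ioo m t, ENNReal.ofReal ((t - s) ^ (-a)))
      = ∫⁻ u in Ioc (0:ℝ) m, ENNReal.ofReal (u ^ (-a)) := by
    have hmp : MeasurePreserving (fun u : ℝ => t - u) volume volume :=
      Measure.measurePreserving_sub_left volume t
    have hemb : MeasurableEmbedding (fun u : ℝ => t - u) :=
      (Homeomorph.subLeft t).measurableEmbedding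
    have himg : (fun u : ℝ => t - u) '' Ioo (0:ℝ) m = Ioo m t := by
      ext s
      simp only [mem_image, mem_Ioo]
      constructor
      · rintro ⟨u, ⟨h1, h2⟩, rfl⟩; constructor <;> linarith
      · rintro ⟨h1, h2⟩; exact ⟨t - s, ⟨by linarith, by linarith⟩, by ring⟩
    calc (∫⁻ s in Ioo m t, ENNReal.ofReal ((t - s) ^ (-a)))
        = ∫⁻ u in Ioo (0:ℝ) m, ENNReal.ofReal ((t - (t - u)) ^ (-a)) := by
          rw [hmp.setLIntegral_comp_emb hemb
            (fun s => ENNReal.ofReal ((t - s) ^ (-a))) (Ioo 0 m), himg]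
      _ = ∫⁻ u in Ioo (0:ℝ) m, ENNReal.ofReal (u ^ (-a)) := by
          apply lintegral_congr; intro u; norm_num
      _ = ∫⁻ u in Ioc (0:ℝ) m, ENNReal.ofReal (u ^ (-a)) :=
          setLIntegral_congr Ioo_ae_eq_Ioc
  have piece2 : (∫⁻ s in Ioo m t, ENNReal.ofReal ((t - s) ^ (-a) * s ^ (-b)))
      ≤ ENNReal.ofReal (m ^ (-b) * (m ^ (1-a) / (1-a))) := by
    have hmono : ∀ s ∈ Ioo m t,
        ENNReal.ofReal ((t - s) ^ (-a) * s ^ (-b))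
          ≤ ENNReal.ofReal (m ^ (-b)) * ENNReal.ofReal ((t - s) ^ (-a)) := by
      intro s hs
      rw [← ENNReal.ofReal_mul (Real.rpow_nonneg hm0.le _)]
      apply ENNReal.ofReal_le_ofReal
      rw [mul_comm (m ^ (-b))]
      apply mul_le_mul_of_nonneg_left _ (Real.rpow_nonneg (by linarith [hs.2] : (0:ℝ) ≤ t - s) _)
      exact Real.rpow_le_rpow_of_nonpos hm0 hs.1.le (by linarith)
    calc (∫⁻ s in Ioo m t, ENNReal.ofReal ((t - s) ^ (-a) * s ^ (-b)))
        ≤ ∫⁻ s in Ioo m t, ENNReal.ofReal (m ^ (-b)) * ENNReal.ofReal ((t - s) ^ (-a)) :=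
          lintegral_mono_ae ((ae_restrict_iff' measurableSet_Ioo).2 (ae_of_all _ hmono))
      _ = ENNReal.ofReal (m ^ (-b)) * ∫⁻ s in Ioo m t, ENNReal.ofReal ((t - s) ^ (-a)) :=
          lintegral_const_mul' _ _ ENNReal.ofReal_ne_top
      _ = ENNReal.ofReal (m ^ (-b)) * ENNReal.ofReal (m ^ (-a+1) / (-a+1)) := by
          rw [hrefl, lint_rpow (by linarith) hm0]
      _ = ENNReal.ofReal (m ^ (-b) * (m ^ (1-a) / (1-a))) := by
          rw [← ENNReal.ofReal_mul (Real.rpow_nonneg hm0.le _)]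
          ring_nf
  have hsum : ENNReal.ofReal (m ^ (-a) * (m ^ (1-b) / (1-b)))
        + ENNReal.ofReal (m ^ (-b) * (m ^ (1-a) / (1-a)))
      = ENNReal.ofReal ((2:ℝ) ^ (a + b - 1) * (1/(1-b) + 1/(1-a)) * t ^ (1 - a - b)) := by
    rw [← ENNReal.ofReal_add (by positivity) (by positivity)]
    congr 1
    have e1 : m ^ (-a) * (m ^ (1-b) / (1-b)) = m ^ (1-a-b) * (1/(1-b)) := by
      rw [div_eq_mul_one_div, ← mul_assoc, ← Real.rpow_add hm0]; ring_nf
    have e2 : m ^ (-b) * (m ^ (1-a) / (1-a)) = m ^ (1-a-b) * (1/(1-a)) := by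
      rw [div_eq_mul_one_div, ← mul_assoc, ← Real.rpow_add hm0]; ring_nf
    have e3 : m ^ (1-a-b) = (2:ℝ) ^ (a+b-1) * t ^ (1-a-b) := by
      rw [hm, Real.div_rpow ht.le (by norm_num), div_eq_mul_inv, ← Real.rpow_neg (by norm_num)]
      ring_nf
    rw [e1, e2, e3]; ring
  calc (∫⁻ s in Ioc (0:ℝ) m, ENNReal.ofReal ((t - s) ^ (-a) * s ^ (-b)))
        + ∫⁻ s in Ioo m t, ENNReal.ofReal ((t - s) ^ (-a) * s ^ (-b))
      ≤ ENNReal.ofReal (m ^ (-a) * (m ^ (1-b) / (1-b)))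
        + ENNReal.ofReal (m ^ (-b) * (m ^ (1-a) / (1-a))) := add_le_add piece1 piece2
    _ = ENNReal.ofReal ((2:ℝ) ^ (a + b - 1) * (1/(1-b) + 1/(1-a)) * t ^ (1 - a - b)) := hsum
    _ = ENNReal.ofReal ((2:ℝ) ^ (a + b - 1) * (1/(1-b) + 1/(1-a)))
        * ENNReal.ofReal (t ^ (1 - a - b)) := by
        rw [← ENNReal.ofReal_mul (by positivity)]

private lemma wLor_tensF (Ω : Set Vec) {q : ℝ} (hq : 0 < q) (u : VF) :
    wLor Ω q (tensF u u) ≤ wLor Ω (2*q) u ^ (2:ℕ) := by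
  refine iSup_le fun t => ?_
  set s : ℝ≥0 := NNReal.sqrt t with hs
  have hset : {x | (t:ℝ) < ‖tensF u u x‖} = {x | (s:ℝ) < ‖u x‖} := by
    ext x
    simp only [mem_setOf_eq, norm_tensF, hs, Real.coe_sqrt]
    rcases eq_or_lt_of_le (norm_nonneg (u x)) with h | h
    · rw [← h]
      norm_num
    · rw [Real.sqrt_lt' h]
  have hcoe : (t : ℝ≥0∞) = (s : ℝ≥0∞) ^ (2:ℕ) := by
    rw [← ENNReal.coe_pow]
    congr 1
    rw [hs, NNReal.sq_sqrt]
  have hmu : (μΩ Ω {x | (s:ℝ) < ‖u x‖}) ^ (1/q)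
      = ((μΩ Ω {x | (s:ℝ) < ‖u x‖}) ^ (1/(2*q))) ^ (2:ℕ) := by
    rw [← ENNReal.rpow_natCast _ 2, ← ENNReal.rpow_mul]
    congr 1
    push_cast
    field_simp
  calc (t : ℝ≥0∞) * (μΩ Ω {x | (t:ℝ) < ‖tensF u u x‖}) ^ (1/q)
      = ((s : ℝ≥0∞) * (μΩ Ω {x | (s:ℝ) < ‖u x‖}) ^ (1/(2*q))) ^ (2:ℕ) := by
        rw [hset, hcoe, hmu, mul_pow]
    _ ≤ wLor Ω (2*q) u ^ (2:ℕ) := by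
        refine pow_le_pow_left' (le_iSup (fun r : ℝ≥0 =>
          (r : ℝ≥0∞) * (μΩ Ω {x | (r:ℝ) < ‖u x‖}) ^ (1/(2*q))) s) 2

private lemma tensF_meas {Ω : Set Vec} {u : VF} (hu : AEStronglyMeasurable u (μΩ Ω)) :
    AEStronglyMeasurable (tensF u u) (μΩ Ω) := by
  obtain ⟨v, hv_meas, hv_eq⟩ := hu
  have hvm : Measurable v := hv_meas.measurable
  have hcomp : ∀ i : Fin 3, Measurable (fun x => v x i) := fun i =>
    (EuclideanSpace.proj (𝕜 := ℝ) i).continuous.measurable.comp hvm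
  have hg : Measurable (fun x (ij : Fin 3 × Fin 3) => v x ij.1 * v x ij.2) := by
    rw [measurable_pi_iff]
    intro ij
    exact (hcomp ij.1).mul (hcomp ij.2)
  have hmeas : Measurable (tensF v v) := by
    have : tensF v v = fun x => (EuclideanSpace.equiv (Fin 3 × Fin 3) ℝ).symm
        (fun ij => v x ij.1 * v x ij.2) := rfl
    rw [this]
    exact (EuclideanSpace.equiv (Fin 3 × Fin 3) ℝ).symm.continuous.measurable.comp hg
  refine ⟨tensF v v, hmeas.stronglyMeasurable, hv_eq.mono fun x hx => ?_⟩
  simp only [tensF, hx]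

/-- `L^∞` estimate for the quadratic term: for `ε ∈ (0,1/4)`,
`q₀ = 3/(2ε) > 6`, `D = ‖ξ‖_{W^{3,2}} < ε₀` and `w ∈ X_{q₀}`, there is `C > 0` with
`∫_0^t ‖T(t,s)P div (w⊗w)(s)‖_∞ ds ≤ C [w]_{q₀}² t^{-1/2}` for all `t > 0`. -/
theorem statement17 (Ω : Set Vec) (hΩ : ExteriorDomain Ω) (𝒯 : ℝ) (h𝒯 : 0 < 𝒯)
    (ε : ℝ) (hε : ε ∈ Ioo (0 : ℝ) (1 / 4)) :
    ∃ ε₀ > 0, ∀ (ξ : ℝ → Vec) (h : ℝ → ℝ) (v : ℝ → VF) (pv : ℝ → Vec → ℝ),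
      PeriodicData 𝒯 ξ → TransitionFn h → W32Norm 𝒯 ξ < ε₀ →
      IsPeriodicSolution Ω 𝒯 ξ v pv → VClass Ω 𝒯 v → PClass Ω 𝒯 pv →
      ∀ (O : OseenEvolution Ω (fun t => h t • ξ t)) (H : Helmholtz Ω)
        (E : ℝ → ℝ → MF → VF), ExtensionOf Ω (fun t => h t • ξ t) O H E →
      ∃ C > 0, ∀ w : ℝ → VF, MemX Ω (3 / (2 * ε)) w → ∀ t : ℝ, 0 < t →
        ∫⁻ s in Ioo (0 : ℝ) t, LpN Ω ∞ (E t s (tensF (w s) (w s)))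
          ≤ ENNReal.ofReal C * brk Ω (3 / (2 * ε)) w ^ (2 : ℕ)
            * ENNReal.ofReal (t ^ (-(1 : ℝ) / 2)) := by
  obtain ⟨hε0, hε14⟩ := hε
  have hεne : ε ≠ 0 := ne_of_gt hε0
  refine ⟨1, one_pos, ?_⟩
  intro ξ h v pv _ _ _ _ _ _ O H E hE
  set q : ℝ := 3 / (4 * ε) with hq
  have hq0 : 0 < q := by positivity
  have hq32 : 3 / 2 < q := by
    rw [hq, div_lt_div_iff₀ two_pos (by positivity)]
    nlinarith
  obtain ⟨C₁, hC₁, hbound⟩ := hE.bound_top q hq32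
  set a : ℝ := 2 * ε + 1 / 2 with ha
  set b : ℝ := 1 - 2 * ε with hb
  obtain ⟨K, hK, hkey⟩ := key_beta (a := a) (b := b)
    (by rw [ha]; linarith) (by rw [ha]; linarith)
    (by rw [hb]; linarith) (by rw [hb]; linarith)
  refine ⟨C₁ * K, mul_pos hC₁ hK, ?_⟩
  intro w hw t ht
  set B := brk Ω (3 / (2 * ε)) w with hB
  have hBfin : B ≠ ∞ := hw.finq.ne
  have h2q : 2 * q = 3 / (2 * ε) := by rw [hq]; field_simp; ring
  have hexp : -(3 / (2 * q)) - 1 / 2 = -a := by rw [hq, ha]; field_simp; ring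
  have hpt : ∀ s ∈ Ioo (0 : ℝ) t, LpN Ω ∞ (E t s (tensF (w s) (w s)))
      ≤ (ENNReal.ofReal C₁ * B ^ (2 : ℕ)) * ENNReal.ofReal ((t - s) ^ (-a) * s ^ (-b)) := by
    intro s hs
    have hs0 : 0 < s := hs.1
    have hms := hw.meas s hs0
    have h1 := hbound s t hs0.le hs.2 (tensF (w s) (w s)) (tensF_meas hms)
    have hce : (1 : ℝ) / 2 - 3 / (2 * (3 / (2 * ε))) = 1 / 2 - ε := by field_simp
    have hle : ENNReal.ofReal (s ^ ((1 : ℝ) / 2 - 3 / (2 * (3 / (2 * ε)))))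
        * wLor Ω (3 / (2 * ε)) (w s) ≤ B := by
      rw [hB, brk]
      exact le_iSup (fun τ : Ioi (0 : ℝ) =>
        ENNReal.ofReal ((τ : ℝ) ^ ((1 : ℝ) / 2 - 3 / (2 * (3 / (2 * ε)))))
          * wLor Ω (3 / (2 * ε)) (w (τ : ℝ))) ⟨s, hs0⟩
    rw [hce] at hle
    have hWle : wLor Ω (3 / (2 * ε)) (w s) ≤ ENNReal.ofReal (s ^ (ε - 1 / 2)) * B := by
      have hone : ENNReal.ofReal (s ^ (ε - 1 / 2)) * ENNReal.ofReal (s ^ ((1 : ℝ) / 2 - ε)) = 1 := by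
        rw [← ENNReal.ofReal_mul (Real.rpow_nonneg hs0.le _), ← Real.rpow_add hs0]
        norm_num
      calc wLor Ω (3 / (2 * ε)) (w s)
          = (ENNReal.ofReal (s ^ (ε - 1 / 2)) * ENNReal.ofReal (s ^ ((1 : ℝ) / 2 - ε)))
            * wLor Ω (3 / (2 * ε)) (w s) := by rw [hone, one_mul]
        _ = ENNReal.ofReal (s ^ (ε - 1 / 2)) * (ENNReal.ofReal (s ^ ((1 : ℝ) / 2 - ε))
            * wLor Ω (3 / (2 * ε)) (w s)) := by rw [mul_assoc]
        _ ≤ ENNReal.ofReal (s ^ (ε - 1 / 2)) * B := mul_le_mul_right hle _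
    have h2 : wLor Ω q (tensF (w s) (w s)) ≤ ENNReal.ofReal (s ^ (-b)) * B ^ (2 : ℕ) := by
      calc wLor Ω q (tensF (w s) (w s))
          ≤ wLor Ω (2 * q) (w s) ^ (2 : ℕ) := wLor_tensF Ω hq0 (w s)
        _ = wLor Ω (3 / (2 * ε)) (w s) ^ (2 : ℕ) := by rw [h2q]
        _ ≤ (ENNReal.ofReal (s ^ (ε - 1 / 2)) * B) ^ (2 : ℕ) := pow_le_pow_left' hWle 2
        _ = ENNReal.ofReal (s ^ (-b)) * B ^ (2 : ℕ) := by
            rw [mul_pow]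
            congr 1
            rw [← ENNReal.ofReal_pow (Real.rpow_nonneg hs0.le _),
              ← Real.rpow_natCast (s ^ (ε - 1 / 2)) 2, ← Real.rpow_mul hs0.le]
            congr 1
            rw [hb]; push_cast; ring
    calc LpN Ω ∞ (E t s (tensF (w s) (w s)))
        ≤ ENNReal.ofReal C₁ * ENNReal.ofReal ((t - s) ^ (-(3 / (2 * q)) - 1 / 2))
          * wLor Ω q (tensF (w s) (w s)) := h1
      _ = ENNReal.ofReal C₁ * ENNReal.ofReal ((t - s) ^ (-a))
          * wLor Ω q (tensF (w s) (w s)) := by rw [hexp]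
      _ ≤ ENNReal.ofReal C₁ * ENNReal.ofReal ((t - s) ^ (-a))
          * (ENNReal.ofReal (s ^ (-b)) * B ^ (2 : ℕ)) := mul_le_mul_right h2 _
      _ = (ENNReal.ofReal C₁ * B ^ (2 : ℕ))
          * (ENNReal.ofReal ((t - s) ^ (-a)) * ENNReal.ofReal (s ^ (-b))) := by ring
      _ = (ENNReal.ofReal C₁ * B ^ (2 : ℕ)) * ENNReal.ofReal ((t - s) ^ (-a) * s ^ (-b)) := by
          rw [ENNReal.ofReal_mul (Real.rpow_nonneg (by linarith [hs.2] : (0:ℝ) ≤ t - s) _)]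
  calc (∫⁻ s in Ioo (0 : ℝ) t, LpN Ω ∞ (E t s (tensF (w s) (w s))))
      ≤ ∫⁻ s in Ioo (0 : ℝ) t,
          (ENNReal.ofReal C₁ * B ^ (2 : ℕ)) * ENNReal.ofReal ((t - s) ^ (-a) * s ^ (-b)) :=
        lintegral_mono_ae ((ae_restrict_iff' measurableSet_Ioo).2 (ae_of_all _ hpt))
    _ = (ENNReal.ofReal C₁ * B ^ (2 : ℕ))
        * ∫⁻ s in Ioo (0 : ℝ) t, ENNReal.ofReal ((t - s) ^ (-a) * s ^ (-b)) :=
        lintegral_const_mul' _ _ (ENNReal.mul_ne_top ENNReal.ofReal_ne_top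
          (ENNReal.pow_ne_top hBfin))
    _ ≤ (ENNReal.ofReal C₁ * B ^ (2 : ℕ)) * (ENNReal.ofReal K * ENNReal.ofReal (t ^ (1 - a - b))) :=
        mul_le_mul_right (hkey t ht) _
    _ = ENNReal.ofReal (C₁ * K) * B ^ (2 : ℕ) * ENNReal.ofReal (t ^ (-(1 : ℝ) / 2)) := by
        rw [ENNReal.ofReal_mul hC₁.le]
        have he : 1 - a - b = -(1 : ℝ) / 2 := by rw [ha, hb]; ring
        rw [he]; ring
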